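/- The function H(x,y,z,E,B) = αz - αxE + (1/2)μ²E² + (1/2)B² is a first integral of the ODE system ẋ = -y, ẏ = x + zE, ż = -yE, Ė = B, Ḃ = αx - μ²E. -/

import Mathlib

/-- H = αz - αxE + (1/2)μ²E² + (1/2)B² is a first integral of the
Belobrov–Zaslavsky–Tartakovsky semiclassical Jaynes–Cummings system. -/
theorem H_first_integral_Belobrov (α μ : ℝ) (x y z E B : ℝ → ℝ)
    (hx : ∀ t, HasDerivAt x (-(y t)) t)
    (hy : ∀ t, HasDerivAt y (x t + z t * E t) t)
    (hz : ∀ t, HasDerivAt z (-(y t) * E t) t)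
    (hE : ∀ t, HasDerivAt E (B t) t)
    (hB : ∀ t, HasDerivAt B (α * x t - μ ^ 2 * E t) t) :
    ∀ t, HasDerivAt
      (fun s => α * z s - α * x s * E s + (1/2) * μ ^ 2 * E s ^ 2 + (1/2) * B s ^ 2) 0 t := by
  intro t
  have h := ((((hz t).const_mul α).sub (((hx t).mul (hE t)).const_mul α)).add
      (((hE t).pow 2).const_mul ((1/2) * μ ^ 2))).add (((hB t).pow 2).const_mul (1/2))
  convert h using 1
  · rfl
  · rfl
  · funext s; simp only [Pi.add_apply, Pi.sub_apply, Pi.mul_apply, Pi.pow_apply]; ring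
  · push_cast; ring
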